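/- arXiv:2102.02837 — 7 statements merged into one kernel-verified Lean document; each statement's English description precedes it below -/
import Mathlib

section
/- The proximal map prox_{λf} is Lipschitz continuous with Lipschitz constant 1/(1 − λℓ): for all x, y ∈ ℝ^d, ‖prox_{λf}(x) − prox_{λf}(y)‖ ≤ (1/(1 − λℓ))‖x − y‖. -/
open RealInnerProductSpace

lemma prox_strong_min {E : Type*} [NormedAddCommGroup E] [InnerProductSpace ℝ E]
    (f : E → ℝ) (ℓ lam : ℝ) (hlam0 : 0 < lam)
    (hwc : ConvexOn ℝ Set.univ (fun x => f x + ℓ / 2 * ‖x‖ ^ 2))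
    (x p : E)
    (hp : ∀ y, f p + 1 / (2 * lam) * ‖p - x‖ ^ 2 ≤ f y + 1 / (2 * lam) * ‖y - x‖ ^ 2)
    (q : E) :
    f p + 1 / (2 * lam) * ‖p - x‖ ^ 2 + (1 / lam - ℓ) / 2 * ‖q - p‖ ^ 2
      ≤ f q + 1 / (2 * lam) * ‖q - x‖ ^ 2 := by
  set B := ‖q - p‖ ^ 2 with hB
  have hBnn : 0 ≤ B := by positivity
  have key : ∀ t : ℝ, t ∈ Set.Ioo (0:ℝ) 1 →
      f p + 1 / (2 * lam) * ‖p - x‖ ^ 2 + (1 - t) * ((1 / lam - ℓ) / 2 * B)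
        ≤ f q + 1 / (2 * lam) * ‖q - x‖ ^ 2 := by
    intro t ht
    obtain ⟨ht0, ht1⟩ := ht
    set u : E := p + t • (q - p) with hu
    have hcomb : (1 - t) • p + t • q = u := by
      rw [hu]; module
    have hconv := hwc.2 (Set.mem_univ p) (Set.mem_univ q)
      (by linarith : (0:ℝ) ≤ 1 - t) (le_of_lt ht0) (by ring)
    rw [hcomb] at hconv
    simp only [smul_eq_mul] at hconv
    have h1 : ‖u - x‖ ^ 2 = ‖p - x‖ ^ 2 + 2 * (t * ⟪p - x, q - p⟫) + t ^ 2 * B := by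
      conv_lhs => rw [show u - x = (p - x) + t • (q - p) from by rw [hu]; abel]
      rw [@norm_add_sq_real, real_inner_smul_right, norm_smul, mul_pow, Real.norm_eq_abs,
        sq_abs, hB]
    have h2 : ‖q - x‖ ^ 2 = ‖p - x‖ ^ 2 + 2 * ⟪p - x, q - p⟫ + B := by
      conv_lhs => rw [show q - x = (p - x) + (q - p) from by abel]
      rw [@norm_add_sq_real, hB]
    have h3 : ‖u‖ ^ 2 = ‖p‖ ^ 2 + 2 * (t * ⟪p, q - p⟫) + t ^ 2 * B := by
      conv_lhs => rw [hu]
      rw [@norm_add_sq_real, real_inner_smul_right, norm_smul, mul_pow, Real.norm_eq_abs,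
        sq_abs, hB]
    have h4 : ‖q‖ ^ 2 = ‖p‖ ^ 2 + 2 * ⟪p, q - p⟫ + B := by
      conv_lhs => rw [show q = p + (q - p) from by abel]
      rw [@norm_add_sq_real, hB]
    have hpu := hp u
    rw [h1] at hpu
    rw [h3, h4] at hconv
    rw [h2]
    set κ := 1 / (2 * lam) with hκ
    have hP : f p ≤ f q + ℓ / 2 * ((1 - t) * B) + κ * (2 * ⟪p - x, q - p⟫) + κ * (t * B) := by
      have step : t * (f p)
          ≤ t * (f q + ℓ / 2 * ((1 - t) * B) + κ * (2 * ⟪p - x, q - p⟫) + κ * (t * B)) := by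
        nlinarith [hpu, hconv]
      exact le_of_mul_le_mul_left step ht0
    have hhalf : (1 / lam - ℓ) / 2 = κ - ℓ / 2 := by
      rw [hκ]; field_simp
    rw [hhalf]
    nlinarith [hP]
  by_contra hcon
  push_neg at hcon
  set c := (1 / lam - ℓ) / 2 * B with hc
  set D := f q + 1 / (2 * lam) * ‖q - x‖ ^ 2 - (f p + 1 / (2 * lam) * ‖p - x‖ ^ 2) with hD
  have hDc : D < c := by rw [hD, hc]; linarith
  have hc0 : 0 < c := by
    by_contra h
    push_neg at h
    have := key (1/2) (by norm_num)
    rw [hD] at hDc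
    linarith
  set t := min (1/2 : ℝ) ((c - D) / (2 * c)) with htd
  have ht0 : 0 < t := by
    apply lt_min (by norm_num)
    have : 0 < c - D := by linarith
    positivity
  have ht1 : t < 1 := lt_of_le_of_lt (min_le_left _ _) (by norm_num)
  have hk := key t ⟨ht0, ht1⟩
  have hDge : (1 - t) * c ≤ D := by rw [hD]; linarith
  rcases min_cases (1/2 : ℝ) ((c - D) / (2 * c)) with ⟨he, hle⟩ | ⟨he, hle⟩
  · rw [htd, he] at hDge
    have h2c : (0:ℝ) < 2 * c := by linarith
    rw [le_div_iff₀ h2c] at hle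
    linarith
  · rw [htd, he] at hDge
    have h2c : (0:ℝ) < 2 * c := by linarith
    have heq : (1 - (c - D) / (2 * c)) * c = (c + D) / 2 := by field_simp; ring
    rw [heq] at hDge
    linarith

/-- The proximal map `prox_{λf}` is Lipschitz continuous with constant
`1/(1 − λℓ)`. -/
theorem prox_map_lipschitz
    {d : ℕ} (hd : 1 ≤ d)
    (f : EuclideanSpace ℝ (Fin d) → ℝ) (ℓ lam : ℝ)
    (hℓ : 0 < ℓ)
    (hlsc : LowerSemicontinuous f)
    (hwc : ConvexOn ℝ Set.univ (fun x => f x + ℓ / 2 * ‖x‖ ^ 2))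
    (hlam : lam ∈ Set.Ioo (0 : ℝ) ℓ⁻¹)
    (prox : EuclideanSpace ℝ (Fin d) → EuclideanSpace ℝ (Fin d))
    (hprox : ∀ x y : EuclideanSpace ℝ (Fin d),
      f (prox x) + 1 / (2 * lam) * ‖prox x - x‖ ^ 2 ≤ f y + 1 / (2 * lam) * ‖y - x‖ ^ 2) :
    ∀ x y : EuclideanSpace ℝ (Fin d),
      ‖prox x - prox y‖ ≤ 1 / (1 - lam * ℓ) * ‖x - y‖ := by
  intro x y
  obtain ⟨hlam0, hlamℓ⟩ := hlam
  have hml : lam * ℓ < 1 := by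
    have h := mul_lt_mul_of_pos_right hlamℓ hℓ
    rwa [inv_mul_cancel₀ (ne_of_gt hℓ)] at h
  have h1m : (0:ℝ) < 1 - lam * ℓ := by linarith
  set p := prox x with hp
  set q := prox y with hq
  have L1 := prox_strong_min f ℓ lam hlam0 hwc x p (fun z => hprox x z) q
  have L2 := prox_strong_min f ℓ lam hlam0 hwc y q (fun z => hprox y z) p
  have hnrev : ‖p - q‖ = ‖q - p‖ := norm_sub_rev _ _
  rw [hnrev] at L2
  have hid : ‖q - x‖ ^ 2 + ‖p - y‖ ^ 2 - ‖p - x‖ ^ 2 - ‖q - y‖ ^ 2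
      = 2 * ⟪p - q, x - y⟫ := by
    simp only [@norm_sub_sq_real, inner_sub_left, inner_sub_right]
    ring
  have hsum : (1 / lam - ℓ) * ‖q - p‖ ^ 2 ≤ 1 / (2 * lam) * (2 * ⟪p - q, x - y⟫) := by
    rw [← hid]
    linarith [L1, L2]
  have h1 : lam * ((1 / lam - ℓ) * ‖q - p‖ ^ 2) = (1 - lam * ℓ) * ‖q - p‖ ^ 2 := by
    field_simp
  have h2 : ∀ c : ℝ, lam * (1 / (2 * lam) * (2 * c)) = c := by
    intro c; field_simp
  have hkey : (1 - lam * ℓ) * ‖p - q‖ ^ 2 ≤ ⟪p - q, x - y⟫ := by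
    have h := mul_le_mul_of_nonneg_left hsum hlam0.le
    rw [h1, h2 _] at h
    rwa [hnrev]
  have hcs := real_inner_le_norm (p - q) (x - y)
  rcases ((norm_nonneg (p - q)).eq_or_lt).imp Eq.symm id with h | h
  · rw [h]
    positivity
  · have hinv : (1 - lam * ℓ) * (1 / (1 - lam * ℓ)) = 1 := by field_simp
    nlinarith [mul_pos h1m h, norm_nonneg (x - y), mul_pos h h]
end

section
/- The gradient map ∇f_λ of the Moreau envelope is Lipschitz continuous with Lipschitz constant max{λ⁻¹, ℓ/(1 − λℓ)}: for all x, y ∈ ℝ^d, ‖∇f_λ(x) − ∇f_λ(y)‖ ≤ max{λ⁻¹, ℓ/(1 − λℓ)}·‖x − y‖. -/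
open RealInnerProductSpace

lemma moreau_subgrad {E : Type*} [NormedAddCommGroup E] [InnerProductSpace ℝ E]
    (f : E → ℝ) (ℓ lam : ℝ)
    (hℓ : 0 ≤ ℓ)
    (hwc : ConvexOn ℝ Set.univ (fun x => f x + ℓ / 2 * ‖x‖ ^ 2))
    (hlam0 : 0 < lam)
    (x p : E)
    (hp : ∀ z, f p + 1 / (2 * lam) * ‖p - x‖ ^ 2 ≤ f z + 1 / (2 * lam) * ‖z - x‖ ^ 2)
    (z : E) :
    ℓ * ⟪p, z - p⟫ - lam⁻¹ * ⟪p - x, z - p⟫ ≤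
      (f z + ℓ / 2 * ‖z‖ ^ 2) - (f p + ℓ / 2 * ‖p‖ ^ 2) := by
  set w : E := z - p with hw
  set c : ℝ := 1 / (2 * lam) with hc
  have hcpos : 0 < c := by positivity
  set D : ℝ := c * ‖w‖ ^ 2 + 1 with hD
  have hD1 : (1 : ℝ) ≤ D := by nlinarith [sq_nonneg ‖w‖]
  have hD0 : 0 < D := by linarith
  apply le_of_forall_pos_le_add
  intro ε hε
  set t : ℝ := min 1 (ε / D) with ht
  have ht0 : 0 < t := lt_min one_pos (by positivity)
  have ht1 : t ≤ 1 := min_le_left _ _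
  have htD : t * D ≤ ε := by
    have h1 : t ≤ ε / D := min_le_right _ _
    calc t * D ≤ (ε / D) * D := by nlinarith
    _ = ε := by field_simp
  -- convexity inequality
  have hconv := hwc.2 (Set.mem_univ p) (Set.mem_univ z)
    (show (0:ℝ) ≤ 1 - t by linarith) ht0.le (by ring)
  simp only [smul_eq_mul] at hconv
  have hyt : (1 - t) • p + t • z = p + t • w := by
    rw [hw, smul_sub, sub_smul, one_smul]; abel
  rw [hyt] at hconv
  have hmin := hp (p + t • w)
  have e1 : ‖p + t • w‖ ^ 2 = ‖p‖ ^ 2 + 2 * (t * ⟪p, w⟫) + t ^ 2 * ‖w‖ ^ 2 := by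
    rw [norm_add_sq_real, real_inner_smul_right, norm_smul, Real.norm_eq_abs, mul_pow, sq_abs]
  have e2 : ‖(p + t • w) - x‖ ^ 2 = ‖p - x‖ ^ 2 + 2 * (t * ⟪p - x, w⟫) + t ^ 2 * ‖w‖ ^ 2 := by
    have h : (p + t • w) - x = (p - x) + t • w := by abel
    rw [h, norm_add_sq_real, real_inner_smul_right, norm_smul, Real.norm_eq_abs, mul_pow, sq_abs]
  rw [e1] at hconv
  rw [e2] at hmin
  -- combine: t * B ≤ t * A + t^2 * (c - ℓ/2) * ‖w‖^2
  have hinv : lam⁻¹ = 2 * c := by rw [hc]; field_simp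
  have key : t * (ℓ * ⟪p, w⟫ - lam⁻¹ * ⟪p - x, w⟫)
      ≤ t * (((f z + ℓ / 2 * ‖z‖ ^ 2) - (f p + ℓ / 2 * ‖p‖ ^ 2)) + t * D) := by
    rw [hinv]
    nlinarith [hconv, hmin, sq_nonneg t,
      mul_nonneg (mul_nonneg (sq_nonneg t) hℓ) (sq_nonneg ‖w‖)]
  have := le_of_mul_le_mul_left key ht0
  calc ℓ * ⟪p, w⟫ - lam⁻¹ * ⟪p - x, w⟫
      ≤ ((f z + ℓ / 2 * ‖z‖ ^ 2) - (f p + ℓ / 2 * ‖p‖ ^ 2)) + t * D := this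
    _ ≤ ((f z + ℓ / 2 * ‖z‖ ^ 2) - (f p + ℓ / 2 * ‖p‖ ^ 2)) + ε :=
        add_le_add_right htD _

lemma sqrt_sq_le {a b : ℝ} (ha : 0 ≤ a) (hb : 0 ≤ b) (h : a ^ 2 ≤ b ^ 2) : a ≤ b := by
  nlinarith

set_option maxHeartbeats 1000000 in
/-- The gradient map `∇f_λ(x) = λ⁻¹(x − prox_{λf}(x))` of the Moreau envelope
is Lipschitz continuous with constant `max{λ⁻¹, ℓ/(1 − λℓ)}`. -/
theorem moreau_gradient_lipschitz
    {d : ℕ} (hd : 1 ≤ d)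
    (f : EuclideanSpace ℝ (Fin d) → ℝ) (ℓ lam : ℝ)
    (hℓ : 0 < ℓ)
    (hlsc : LowerSemicontinuous f)
    (hwc : ConvexOn ℝ Set.univ (fun x => f x + ℓ / 2 * ‖x‖ ^ 2))
    (hlam : lam ∈ Set.Ioo (0 : ℝ) ℓ⁻¹)
    (prox : EuclideanSpace ℝ (Fin d) → EuclideanSpace ℝ (Fin d))
    (hprox : ∀ x y : EuclideanSpace ℝ (Fin d),
      f (prox x) + 1 / (2 * lam) * ‖prox x - x‖ ^ 2 ≤ f y + 1 / (2 * lam) * ‖y - x‖ ^ 2) :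
    ∀ x y : EuclideanSpace ℝ (Fin d),
      ‖lam⁻¹ • (x - prox x) - lam⁻¹ • (y - prox y)‖ ≤
        max lam⁻¹ (ℓ / (1 - lam * ℓ)) * ‖x - y‖ := by
  intro x y
  obtain ⟨hlam0, hlam2⟩ := hlam
  have hlam1 : lam * ℓ < 1 := by
    have h := mul_lt_mul_of_pos_right hlam2 hℓ
    rwa [inv_mul_cancel₀ hℓ.ne'] at h
  set p := prox x with hp
  set q := prox y with hq
  have h1 := moreau_subgrad f ℓ lam hℓ.le hwc hlam0 x p (hprox x) q
  have h2 := moreau_subgrad f ℓ lam hℓ.le hwc hlam0 y q (hprox y) p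
  have hA : ℓ * (⟪p, q - p⟫ + ⟪q, p - q⟫)
      - lam⁻¹ * (⟪p - x, q - p⟫ + ⟪q - y, p - q⟫) ≤ 0 := by
    have := add_le_add h1 h2
    linarith [this]
  have i1 : ⟪p, q - p⟫ + ⟪q, p - q⟫ = -⟪p - q, p - q⟫ := by
    simp only [inner_sub_left, inner_sub_right]
    rw [real_inner_comm q p]; ring
  have i2 : ⟪p - x, q - p⟫ + ⟪q - y, p - q⟫ = ⟪x - y, p - q⟫ - ⟪p - q, p - q⟫ := by
    simp only [inner_sub_left, inner_sub_right]
    rw [real_inner_comm q p]; ring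
  rw [i1, i2] at hA
  have hA2 : lam * ℓ * (-⟪p - q, p - q⟫) - (⟪x - y, p - q⟫ - ⟪p - q, p - q⟫) ≤ 0 := by
    have h4 := mul_le_mul_of_nonneg_left hA hlam0.le
    rw [mul_zero] at h4
    calc lam * ℓ * (-⟪p - q, p - q⟫) - (⟪x - y, p - q⟫ - ⟪p - q, p - q⟫)
        = lam * (ℓ * (-⟪p - q, p - q⟫)
            - lam⁻¹ * (⟪x - y, p - q⟫ - ⟪p - q, p - q⟫)) := by
          field_simp
      _ ≤ 0 := h4
  have hN : ⟪p - q, p - q⟫ = ‖p - q‖ ^ 2 := real_inner_self_eq_norm_sq _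
  rw [hN] at hA2
  have hCS : ⟪x - y, p - q⟫ ≤ ‖x - y‖ * ‖p - q‖ := real_inner_le_norm _ _
  -- rewrite the goal
  have hgoal : lam⁻¹ • (x - p) - lam⁻¹ • (y - q) = lam⁻¹ • ((x - y) - (p - q)) := by
    rw [← smul_sub]; congr 1; abel
  rw [hgoal, norm_smul, Real.norm_eq_abs, abs_of_pos (by positivity : (0:ℝ) < lam⁻¹)]
  have hexp : ‖(x - y) - (p - q)‖ ^ 2
      = ‖x - y‖ ^ 2 - 2 * ⟪x - y, p - q⟫ + ‖p - q‖ ^ 2 := norm_sub_sq_real _ _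
  set nu := ‖x - y‖ with hnu
  set nv := ‖p - q‖ with hnv
  set α : ℝ := 1 - lam * ℓ with hα
  have hα0 : 0 < α := by simp only [hα]; linarith
  have hkey : α * nv ^ 2 ≤ ⟪x - y, p - q⟫ := by simp only [hα]; nlinarith [hA2]
  have hnu0 : 0 ≤ nu := norm_nonneg _
  have hnv0 : 0 ≤ nv := norm_nonneg _
  rcases le_or_gt (1/2) α with hhalf | hhalf
  · -- α ≥ 1/2 : nonexpansive case
    have hle : ‖(x - y) - (p - q)‖ ≤ nu := by
      apply sqrt_sq_le (norm_nonneg _) hnu0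
      rw [hexp]
      have t0 : 0 ≤ (2 * α - 1) * nv ^ 2 := mul_nonneg (by linarith) (sq_nonneg nv)
      linarith [hkey, t0]
    calc lam⁻¹ * ‖(x - y) - (p - q)‖ ≤ lam⁻¹ * nu := by
          apply mul_le_mul_of_nonneg_left hle (by positivity)
      _ ≤ max lam⁻¹ (ℓ / (1 - lam * ℓ)) * nu :=
          mul_le_mul_of_nonneg_right (le_max_left _ _) hnu0
  · -- α < 1/2
    have hvle : α * nv ≤ nu := by
      rcases eq_or_lt_of_le hnv0 with h0 | h0
      · rw [← h0]; simpa using hnu0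
      · have hh := hkey.trans hCS
        exact le_of_mul_le_mul_right (by nlinarith [hh]) h0
    have hsq : (α * nv) ^ 2 ≤ nu ^ 2 := by
      nlinarith [hvle, mul_nonneg hα0.le hnv0]
    have t1 : 0 ≤ α ^ 2 * (⟪x - y, p - q⟫ - α * nv ^ 2) :=
      mul_nonneg (sq_nonneg α) (by linarith [hkey])
    have t2 : 0 ≤ (1 - 2 * α) * (nu ^ 2 - (α * nv) ^ 2) :=
      mul_nonneg (by linarith) (by linarith [hsq])
    have hle : α * ‖(x - y) - (p - q)‖ ≤ (1 - α) * nu := by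
      apply sqrt_sq_le (by positivity) (by nlinarith [mul_nonneg (by linarith : (0:ℝ) ≤ 1 - α) hnu0])
      rw [mul_pow, mul_pow, hexp]
      nlinarith [t1, t2]
    have hle2 : ‖(x - y) - (p - q)‖ ≤ (1 - α) / α * nu := by
      rw [div_mul_eq_mul_div, le_div_iff₀ hα0]
      linarith [hle]
    calc lam⁻¹ * ‖(x - y) - (p - q)‖ ≤ lam⁻¹ * ((1 - α) / α * nu) := by
          apply mul_le_mul_of_nonneg_left hle2 (by positivity)
      _ = ℓ / (1 - lam * ℓ) * nu := by
          simp only [hα]; field_simp; ring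
      _ ≤ max lam⁻¹ (ℓ / (1 - lam * ℓ)) * nu :=
          mul_le_mul_of_nonneg_right (le_max_right _ _) hnu0
end

section
/- If x̄ ∈ ℝ^d is a local minimum of the Moreau envelope f_λ, then f_λ(x̄) = f(x̄) and x̄ is a local minimum of f. -/
/-- If `x̄` is a local minimum of the Moreau envelope `f_λ`, then
`f_λ(x̄) = f(x̄)` and `x̄` is a local minimum of `f`. -/
theorem local_min_of_moreau_local_min
    {d : ℕ} (hd : 1 ≤ d)
    (f : EuclideanSpace ℝ (Fin d) → ℝ) (ℓ lam : ℝ)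
    (hℓ : 0 < ℓ)
    (hlsc : LowerSemicontinuous f)
    (hwc : ConvexOn ℝ Set.univ (fun x => f x + ℓ / 2 * ‖x‖ ^ 2))
    (hlam : lam ∈ Set.Ioo (0 : ℝ) ℓ⁻¹)
    (prox : EuclideanSpace ℝ (Fin d) → EuclideanSpace ℝ (Fin d))
    (hprox : ∀ x y : EuclideanSpace ℝ (Fin d),
      f (prox x) + 1 / (2 * lam) * ‖prox x - x‖ ^ 2 ≤ f y + 1 / (2 * lam) * ‖y - x‖ ^ 2)
    (flam : EuclideanSpace ℝ (Fin d) → ℝ)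
    (hflam : ∀ x, flam x = f (prox x) + 1 / (2 * lam) * ‖prox x - x‖ ^ 2)
    (xbar : EuclideanSpace ℝ (Fin d))
    (hmin : IsLocalMin flam xbar) :
    flam xbar = f xbar ∧ IsLocalMin f xbar := by
  have hlam0 : 0 < lam := hlam.1
  have hc : 0 < 1 / (2 * lam) := by positivity
  have hle : ∀ x, flam x ≤ f x := by
    intro x
    rw [hflam]
    simpa using hprox x x
  have hpx : prox xbar = xbar := by
    by_contra hne
    set p := prox xbar with hp
    have hr : 0 < ‖p - xbar‖ := by
      rw [norm_pos_iff, sub_ne_zero]; exact hne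
    obtain ⟨ε, hε, hball⟩ := Metric.eventually_nhds_iff_ball.mp hmin
    set r := ‖p - xbar‖ with hrdef
    set t : ℝ := min (ε / (2 * r)) (1 / 2) with ht
    have ht0 : 0 < t := lt_min (by positivity) (by norm_num)
    have ht1 : t ≤ 1 / 2 := min_le_right _ _
    set xt := xbar + t • (p - xbar) with hxt
    have hdist : xt ∈ Metric.ball xbar ε := by
      rw [Metric.mem_ball, dist_eq_norm]
      have h : xt - xbar = t • (p - xbar) := by rw [hxt]; abel
      rw [h, norm_smul, Real.norm_of_nonneg ht0.le]
      calc t * r ≤ ε / (2 * r) * r :=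
            mul_le_mul_of_nonneg_right (min_le_left _ _) hr.le
        _ = ε / 2 := by field_simp
        _ < ε := by linarith
    have h1 : flam xbar ≤ flam xt := hball xt hdist
    have h2 : flam xt ≤ f p + 1 / (2 * lam) * ((1 - t) * r) ^ 2 := by
      rw [hflam]
      have hsub : p - xt = (1 - t) • (p - xbar) := by
        rw [hxt]; rw [sub_smul, one_smul]; abel
      calc f (prox xt) + 1 / (2 * lam) * ‖prox xt - xt‖ ^ 2
          ≤ f p + 1 / (2 * lam) * ‖p - xt‖ ^ 2 := hprox xt p
        _ = f p + 1 / (2 * lam) * ((1 - t) * r) ^ 2 := by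
            rw [hsub, norm_smul, Real.norm_of_nonneg (by linarith : (0:ℝ) ≤ 1 - t)]
    have h3 : flam xbar = f p + 1 / (2 * lam) * r ^ 2 := by rw [hflam]
    have hlt : ((1 - t) * r) ^ 2 < r ^ 2 := by
      have hab : (1 - t) * r < r := by nlinarith
      have hnn : 0 ≤ (1 - t) * r := by nlinarith
      exact pow_lt_pow_left₀ hab hnn two_ne_zero
    nlinarith
  have heq : flam xbar = f xbar := by
    rw [hflam, hpx]; simp
  refine ⟨heq, ?_⟩
  have : ∀ᶠ x in nhds xbar, f xbar ≤ f x := by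
    filter_upwards [hmin] with x hx
    calc f xbar = flam xbar := heq.symm
      _ ≤ flam x := hx
      _ ≤ f x := hle x
  exact this
end

section
/- Suppose for every x ∈ ℝ^d there exists a μ-weakly convex function f_x : ℝ^d → ℝ such that |f(y) − f_x(y)| ≤ (β/2)‖y − x‖² for all y ∈ ℝ^d. Then f is (β + μ)-weakly convex, i.e. x ↦ f(x) + ((β + μ)/2)‖x‖² is convex. -/
/-- If for every `x` there is a `μ`-weakly convex model `f_x` with
`|f(y) − f_x(y)| ≤ (β/2)‖y − x‖²` for all `y`, then `f` is `(β + μ)`-weakly convex. -/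
theorem weakly_convex_of_model_approx
    {d : ℕ} (hd : 1 ≤ d)
    (f : EuclideanSpace ℝ (Fin d) → ℝ) (β μ : ℝ)
    (hβ : 0 < β) (hμ : 0 ≤ μ)
    (hmodel : ∀ x : EuclideanSpace ℝ (Fin d),
      ∃ fx : EuclideanSpace ℝ (Fin d) → ℝ,
        ConvexOn ℝ Set.univ (fun y => fx y + μ / 2 * ‖y‖ ^ 2) ∧
        ∀ y : EuclideanSpace ℝ (Fin d), |f y - fx y| ≤ β / 2 * ‖y - x‖ ^ 2) :
    ConvexOn ℝ Set.univ (fun x => f x + (β + μ) / 2 * ‖x‖ ^ 2) := by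
  refine ⟨convex_univ, ?_⟩
  intro x _ y _ a b ha hb hab
  set z := a • x + b • y with hzdef
  obtain ⟨fz, hconv, happ⟩ := hmodel z
  have h1 : f z ≤ fz z := by
    have h0 : |f z - fz z| ≤ 0 := by simpa using happ z
    have := le_abs_self (f z - fz z)
    linarith
  have h2 : fz x ≤ f x + β / 2 * ‖x - z‖ ^ 2 := by
    have := neg_abs_le (f x - fz x)
    have := happ x
    linarith
  have h3 : fz y ≤ f y + β / 2 * ‖y - z‖ ^ 2 := by
    have := neg_abs_le (f y - fz y)
    have := happ y
    linarith
  have hxz : x - z = b • (x - y) := by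
    have hb' : b = 1 - a := by linarith
    rw [hzdef, hb']
    module
  have hyz : y - z = a • (y - x) := by
    have ha' : a = 1 - b := by linarith
    rw [hzdef, ha']
    module
  have hnxz : ‖x - z‖ ^ 2 = b ^ 2 * ‖x - y‖ ^ 2 := by
    rw [hxz, norm_smul, Real.norm_eq_abs, abs_of_nonneg hb, mul_pow]
  have hnyz : ‖y - z‖ ^ 2 = a ^ 2 * ‖x - y‖ ^ 2 := by
    rw [hyz, norm_smul, Real.norm_eq_abs, abs_of_nonneg ha, mul_pow, ← neg_sub x y,
      norm_neg]
  have hxy : ‖x - y‖ ^ 2 = ‖x‖ ^ 2 - 2 * inner ℝ x y + ‖y‖ ^ 2 :=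
    norm_sub_sq_real x y
  have hz2 : ‖z‖ ^ 2 = a ^ 2 * ‖x‖ ^ 2 + 2 * a * b * inner ℝ x y + b ^ 2 * ‖y‖ ^ 2 := by
    have hax : ‖a • x‖ = a * ‖x‖ := by
      rw [norm_smul, Real.norm_eq_abs, abs_of_nonneg ha]
    have hby : ‖b • y‖ = b * ‖y‖ := by
      rw [norm_smul, Real.norm_eq_abs, abs_of_nonneg hb]
    rw [← real_inner_self_eq_norm_sq, hzdef]
    simp only [inner_add_left, inner_add_right, real_inner_smul_left, real_inner_smul_right,
      real_inner_self_eq_norm_sq, real_inner_comm y x]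
    rw [hax, hby]
    ring
  have hcv := hconv.2 (Set.mem_univ x) (Set.mem_univ y) ha hb hab
  simp only [smul_eq_mul] at hcv
  have hcv' : fz z + μ / 2 * ‖z‖ ^ 2 ≤ a * (fz x + μ / 2 * ‖x‖ ^ 2) +
      b * (fz y + μ / 2 * ‖y‖ ^ 2) := hcv
  have h2' : a * fz x ≤ a * (f x + β / 2 * ‖x - z‖ ^ 2) :=
    mul_le_mul_of_nonneg_left h2 ha
  have h3' : b * fz y ≤ b * (f y + β / 2 * ‖y - z‖ ^ 2) :=
    mul_le_mul_of_nonneg_left h3 hb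
  have key : a * (β / 2 * ‖x - z‖ ^ 2) + b * (β / 2 * ‖y - z‖ ^ 2) + β / 2 * ‖z‖ ^ 2 =
      a * (β / 2 * ‖x‖ ^ 2) + b * (β / 2 * ‖y‖ ^ 2) := by
    rw [hnxz, hnyz, hz2, hxy]
    have hb' : b = 1 - a := by linarith
    rw [hb']; ring
  simp only [smul_eq_mul]
  nlinarith [hcv', h1, h2', h3', key]
end

section
/- Three-point inequality: for every x ∈ ℝ^d, writing x⁺ = S(x) and x̄ = prox_{λf}(x), one has (L − λ⁻¹ − β)‖x⁺ − x‖² ≤ (L − λ⁻¹ + β)‖x̄ − x‖² − (L + λ⁻¹ − β − 2μ)‖x̄ − x⁺‖². -/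
open Set

/-- An affine function `y ↦ ⟪v, y⟫ + c` is convex. -/
lemma affine_inner_convexOn {E : Type*} [NormedAddCommGroup E] [InnerProductSpace ℝ E]
    (v : E) (c : ℝ) : ConvexOn ℝ Set.univ (fun y => (inner ℝ v y : ℝ) + c) := by
  refine ⟨convex_univ, fun x _ y _ a b ha hb hab => ?_⟩
  simp only [inner_add_right, inner_smul_right, smul_eq_mul]
  have h : a * c + b * c = c := by rw [← add_mul, hab, one_mul]
  linarith

/-- Growth at a minimizer of a strongly convex function. -/
lemma min_growth {E : Type*} [NormedAddCommGroup E] [InnerProductSpace ℝ E]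
    {φ : E → ℝ} {K : ℝ} (hK : 0 ≤ K) (h : StrongConvexOn Set.univ K φ)
    {m : E} (hm : ∀ y, φ m ≤ φ y) (y : E) :
    φ m + K / 2 * ‖y - m‖ ^ 2 ≤ φ y := by
  set C := K / 2 * ‖m - y‖ ^ 2 with hCdef
  have hCy : K / 2 * ‖y - m‖ ^ 2 = C := by rw [hCdef, norm_sub_rev]
  rw [hCy]
  have hC0 : 0 ≤ C := by positivity
  have key : ∀ a b : ℝ, 0 ≤ a → 0 ≤ b → a + b = 1 → b * φ m + a * b * C ≤ b * φ y := by
    intro a b ha hb hab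
    have h1 := h.2 (Set.mem_univ m) (Set.mem_univ y) ha hb hab
    have h2 := hm (a • m + b • y)
    simp only [smul_eq_mul] at h1
    have h3 := h2.trans h1
    rw [← hCdef] at h3
    have ha' : a = 1 - b := by linarith
    subst ha'
    nlinarith [h3]
  rcases eq_or_lt_of_le hC0 with hC0' | hCpos
  · have := key 0 1 le_rfl zero_le_one (by norm_num)
    simp at this
    rw [← hC0']
    linarith
  · by_contra hcon
    push_neg at hcon
    set u := φ m + C - φ y with hu
    have hupos : 0 < u := by rw [hu]; linarith
    set b := min 1 (u / (2 * C)) with hb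
    have hb0 : 0 < b := lt_min one_pos (by positivity)
    have hb1 : b ≤ 1 := min_le_left _ _
    have hk := key (1 - b) b (by linarith) hb0.le (by ring)
    have hbC : b * C ≤ u / 2 := by
      have hble : b ≤ u / (2 * C) := min_le_right _ _
      have h4 : b * C ≤ (u / (2 * C)) * C := by nlinarith
      calc b * C ≤ (u / (2 * C)) * C := h4
        _ = u / 2 := by field_simp
    have hdiv : φ m + (1 - b) * C ≤ φ y := by
      have h' : b * (φ m + (1 - b) * C) ≤ b * φ y := by nlinarith [hk]
      exact le_of_mul_le_mul_left h' hb0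
    nlinarith [hdiv, hbC, hupos]

set_option maxHeartbeats 2000000 in
/-- Three-point inequality: for every `x`, writing `x⁺ = S(x)` and
`x̄ = prox_{λf}(x)`, one has
`(L − λ⁻¹ − β)‖x⁺ − x‖² ≤ (L − λ⁻¹ + β)‖x̄ − x‖² − (L + λ⁻¹ − β − 2μ)‖x̄ − x⁺‖²`. -/
theorem three_point_inequality
    {d : ℕ} (hd : 1 ≤ d)
    (f : EuclideanSpace ℝ (Fin d) → ℝ)
    (model : EuclideanSpace ℝ (Fin d) → EuclideanSpace ℝ (Fin d) → ℝ)
    (β μ L lam : ℝ)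
    (hβ : 0 < β) (hμ : 0 ≤ μ)
    (hlsc : LowerSemicontinuous f)
    (hmodel_lsc : ∀ x, LowerSemicontinuous (model x))
    (hmodel_wc : ∀ x, ConvexOn ℝ Set.univ (fun y => model x y + μ / 2 * ‖y‖ ^ 2))
    (hmodel_close : ∀ x y : EuclideanSpace ℝ (Fin d),
      |f y - model x y| ≤ β / 2 * ‖y - x‖ ^ 2)
    (hL : L > 7 / 2 * β + 3 * μ)
    (hlam : lam = (L / 2 + (β + 2 * μ) / 4)⁻¹)
    (prox : EuclideanSpace ℝ (Fin d) → EuclideanSpace ℝ (Fin d))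
    (hprox : ∀ x y : EuclideanSpace ℝ (Fin d),
      f (prox x) + 1 / (2 * lam) * ‖prox x - x‖ ^ 2 ≤ f y + 1 / (2 * lam) * ‖y - x‖ ^ 2)
    (S : EuclideanSpace ℝ (Fin d) → EuclideanSpace ℝ (Fin d))
    (hS : ∀ x y : EuclideanSpace ℝ (Fin d),
      model x (S x) + L / 2 * ‖S x - x‖ ^ 2 ≤ model x y + L / 2 * ‖y - x‖ ^ 2)
    (flam : EuclideanSpace ℝ (Fin d) → ℝ)
    (hflam : ∀ x, flam x = f (prox x) + 1 / (2 * lam) * ‖prox x - x‖ ^ 2) :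
    ∀ x : EuclideanSpace ℝ (Fin d),
      (L - lam⁻¹ - β) * ‖S x - x‖ ^ 2 ≤
        (L - lam⁻¹ + β) * ‖prox x - x‖ ^ 2 -
          (L + lam⁻¹ - β - 2 * μ) * ‖prox x - S x‖ ^ 2 := by
  intro x
  set s : ℝ := L / 2 + (β + 2 * μ) / 4 with hs
  have hspos : 0 < s := by rw [hs]; nlinarith
  have hlaminv : lam⁻¹ = s := by rw [hlam, inv_inv]
  have hlampos : 0 < lam := by rw [hlam]; positivity
  have hhalf : 1 / (2 * lam) = s / 2 := by
    rw [← hlaminv]; field_simp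
  set xb := prox x with hxb
  set xp := S x with hxp
  clear_value s
  -- model value at its own center equals f
  have hmodel_self : ∀ z : EuclideanSpace ℝ (Fin d), model z z = f z := by
    intro z
    have h := hmodel_close z z
    simp at h
    linarith
  -- (1) strong growth of the S subproblem
  have hK1 : (0:ℝ) ≤ L - μ := by nlinarith
  have hsc1 : StrongConvexOn Set.univ (L - μ)
      (fun y : EuclideanSpace ℝ (Fin d) => model x y + L / 2 * ‖y - x‖ ^ 2) := by
    rw [strongConvexOn_iff_convex]
    have h1 := hmodel_wc x
    have h2 := affine_inner_convexOn (-(L : ℝ) • x) (L / 2 * ‖x‖ ^ 2)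
    have heq : (fun y : EuclideanSpace ℝ (Fin d) =>
        (model x y + L / 2 * ‖y - x‖ ^ 2) - (L - μ) / 2 * ‖y‖ ^ 2)
        = fun y => (model x y + μ / 2 * ‖y‖ ^ 2)
            + ((inner ℝ (-(L : ℝ) • x) y : ℝ) + L / 2 * ‖x‖ ^ 2) := by
      funext y
      have hn := norm_sub_sq_real y x
      have hi : (inner ℝ (-(L : ℝ) • x) y : ℝ) = -L * (inner ℝ x y : ℝ) :=
        real_inner_smul_left x y (-(L : ℝ))
      have hc : (inner ℝ x y : ℝ) = (inner ℝ y x : ℝ) := real_inner_comm y x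
      rw [hi]
      linear_combination (L / 2) * hn + L * hc
    rw [heq]
    exact h1.add h2
  have hg1 := min_growth hK1 hsc1 (fun y => hS x y) xb
  rw [← hxp] at hg1
  -- (3) strong growth of the prox subproblem via the model at xb
  have hK2 : (0:ℝ) ≤ β + s - μ := by rw [hs]; nlinarith
  have hsc2 : StrongConvexOn Set.univ (β + s - μ)
      (fun y : EuclideanSpace ℝ (Fin d) =>
        model xb y + β / 2 * ‖y - xb‖ ^ 2 + s / 2 * ‖y - x‖ ^ 2) := by
    rw [strongConvexOn_iff_convex]
    have h1 := hmodel_wc xb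
    have h2 := affine_inner_convexOn (-(β : ℝ) • xb + -(s : ℝ) • x)
        (β / 2 * ‖xb‖ ^ 2 + s / 2 * ‖x‖ ^ 2)
    have heq : (fun y : EuclideanSpace ℝ (Fin d) =>
        (model xb y + β / 2 * ‖y - xb‖ ^ 2 + s / 2 * ‖y - x‖ ^ 2)
          - (β + s - μ) / 2 * ‖y‖ ^ 2)
        = fun y => (model xb y + μ / 2 * ‖y‖ ^ 2)
            + ((inner ℝ (-(β : ℝ) • xb + -(s : ℝ) • x) y : ℝ)
              + (β / 2 * ‖xb‖ ^ 2 + s / 2 * ‖x‖ ^ 2)) := by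
      funext y
      have hn1 := norm_sub_sq_real y xb
      have hn2 := norm_sub_sq_real y x
      have hi : (inner ℝ (-(β : ℝ) • xb + -(s : ℝ) • x) y : ℝ)
          = -β * (inner ℝ xb y : ℝ) + -s * (inner ℝ x y : ℝ) := by
        rw [inner_add_left, real_inner_smul_left, real_inner_smul_left]
      have hc1 : (inner ℝ xb y : ℝ) = (inner ℝ y xb : ℝ) := real_inner_comm y xb
      have hc2 : (inner ℝ x y : ℝ) = (inner ℝ y x : ℝ) := real_inner_comm y x
      rw [hi]
      linear_combination (β / 2) * hn1 + (s / 2) * hn2 + β * hc1 + s * hc2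
    rw [heq]
    exact h1.add h2
  have hmin2 : ∀ y : EuclideanSpace ℝ (Fin d),
      model xb xb + β / 2 * ‖xb - xb‖ ^ 2 + s / 2 * ‖xb - x‖ ^ 2
        ≤ model xb y + β / 2 * ‖y - xb‖ ^ 2 + s / 2 * ‖y - x‖ ^ 2 := by
    intro y
    have hcl := abs_le.mp (hmodel_close xb y)
    have hp := hprox x y
    rw [hhalf] at hp
    rw [hmodel_self xb]
    simp only [sub_self, norm_zero]
    nlinarith [hcl.1, hp]
  have hg2 := min_growth hK2 hsc2 hmin2 xp
  simp only [sub_self, norm_zero] at hg2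
  rw [hmodel_self xb] at hg2
  -- closeness inequalities
  have hcl1 := abs_le.mp (hmodel_close x xp)
  have hcl2 := abs_le.mp (hmodel_close x xb)
  have hcl3 := abs_le.mp (hmodel_close xb xp)
  -- unify norm orientations
  have hrev : ‖xp - xb‖ = ‖xb - xp‖ := norm_sub_rev _ _
  rw [hrev] at hg2 hcl3
  rw [hlaminv]
  nlinarith [hg1, hg2, hcl1.1, hcl1.2, hcl2.1, hcl2.2, hcl3.1, hcl3.2]
end

section
/- Step-size bound: for every x ∈ ℝ^d, ‖S(x) − x‖² ≤ θ₁ η² ‖∇f_λ(x)‖², where η = 1/L and θ₁ = (L − λ⁻¹ + β)λ²L² / (L − λ⁻¹ − β). -/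
/-- Step-size bound: for every `x`,
`‖S(x) − x‖² ≤ θ₁ η² ‖∇f_λ(x)‖²`, where `η = 1/L` and
`θ₁ = (L − λ⁻¹ + β)λ²L²/(L − λ⁻¹ − β)`, and `∇f_λ(x) = λ⁻¹(x − prox_{λf}(x))`. -/
theorem prox_step_size_bound
    {d : ℕ} (hd : 1 ≤ d)
    (f : EuclideanSpace ℝ (Fin d) → ℝ)
    (model : EuclideanSpace ℝ (Fin d) → EuclideanSpace ℝ (Fin d) → ℝ)
    (β μ L lam : ℝ)
    (hβ : 0 < β) (hμ : 0 ≤ μ)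
    (hlsc : LowerSemicontinuous f)
    (hmodel_lsc : ∀ x, LowerSemicontinuous (model x))
    (hmodel_wc : ∀ x, ConvexOn ℝ Set.univ (fun y => model x y + μ / 2 * ‖y‖ ^ 2))
    (hmodel_close : ∀ x y : EuclideanSpace ℝ (Fin d),
      |f y - model x y| ≤ β / 2 * ‖y - x‖ ^ 2)
    (hL : L > 7 / 2 * β + 3 * μ)
    (hlam : lam = (L / 2 + (β + 2 * μ) / 4)⁻¹)
    (prox : EuclideanSpace ℝ (Fin d) → EuclideanSpace ℝ (Fin d))
    (hprox : ∀ x y : EuclideanSpace ℝ (Fin d),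
      f (prox x) + 1 / (2 * lam) * ‖prox x - x‖ ^ 2 ≤ f y + 1 / (2 * lam) * ‖y - x‖ ^ 2)
    (S : EuclideanSpace ℝ (Fin d) → EuclideanSpace ℝ (Fin d))
    (hS : ∀ x y : EuclideanSpace ℝ (Fin d),
      model x (S x) + L / 2 * ‖S x - x‖ ^ 2 ≤ model x y + L / 2 * ‖y - x‖ ^ 2)
    (flam : EuclideanSpace ℝ (Fin d) → ℝ)
    (hflam : ∀ x, flam x = f (prox x) + 1 / (2 * lam) * ‖prox x - x‖ ^ 2) :
    ∀ x : EuclideanSpace ℝ (Fin d),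
      ‖S x - x‖ ^ 2 ≤
        ((L - lam⁻¹ + β) * lam ^ 2 * L ^ 2 / (L - lam⁻¹ - β)) * (1 / L) ^ 2 *
          ‖lam⁻¹ • (x - prox x)‖ ^ 2 := by

  intro x
  have hLpos : 0 < L := by linarith
  have hpos : 0 < L / 2 + (β + 2 * μ) / 4 := by linarith
  have hlam_pos : 0 < lam := by rw [hlam]; positivity
  have hlaminv : lam⁻¹ = L / 2 + (β + 2 * μ) / 4 := by rw [hlam, inv_inv]
  have hD : 0 < L - lam⁻¹ - β := by rw [hlaminv]; linarith
  set p := prox x with hp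
  set s := S x with hs
  have h1 := hS x p
  have h2 := hprox x s
  have h3 := abs_le.mp (hmodel_close x s)
  have h4 := abs_le.mp (hmodel_close x p)
  have hlamne : lam ≠ 0 := ne_of_gt hlam_pos
  have hinv : 1 / (2 * lam) = lam⁻¹ / 2 := by field_simp
  rw [hinv] at h2
  have key : (L - lam⁻¹ - β) * ‖s - x‖ ^ 2 ≤ (L - lam⁻¹ + β) * ‖p - x‖ ^ 2 := by
    nlinarith [h1, h2, h3.1, h3.2, h4.1, h4.2]
  have hxp : ‖lam⁻¹ • (x - p)‖ ^ 2 = lam⁻¹ ^ 2 * ‖p - x‖ ^ 2 := by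
    rw [norm_smul, norm_sub_rev]
    rw [mul_pow, Real.norm_eq_abs, sq_abs]
  rw [hxp]
  have hLne : L ≠ 0 := ne_of_gt hLpos
  have hDne : L - lam⁻¹ - β ≠ 0 := ne_of_gt hD
  have hRHS : ((L - lam⁻¹ + β) * lam ^ 2 * L ^ 2 / (L - lam⁻¹ - β)) * (1 / L) ^ 2 *
      (lam⁻¹ ^ 2 * ‖p - x‖ ^ 2) = (L - lam⁻¹ + β) * ‖p - x‖ ^ 2 / (L - lam⁻¹ - β) := by
    have e1 : lam ^ 2 * lam⁻¹ ^ 2 = 1 := by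
      rw [← mul_pow, mul_inv_cancel₀ hlamne, one_pow]
    have e2 : L ^ 2 * (1 / L) ^ 2 = 1 := by
      rw [← mul_pow, mul_one_div_cancel hLne, one_pow]
    calc ((L - lam⁻¹ + β) * lam ^ 2 * L ^ 2 / (L - lam⁻¹ - β)) * (1 / L) ^ 2 *
        (lam⁻¹ ^ 2 * ‖p - x‖ ^ 2)
        = ((L - lam⁻¹ + β) * ‖p - x‖ ^ 2 / (L - lam⁻¹ - β)) * (lam ^ 2 * lam⁻¹ ^ 2) *
          (L ^ 2 * (1 / L) ^ 2) := by ring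
      _ = (L - lam⁻¹ + β) * ‖p - x‖ ^ 2 / (L - lam⁻¹ - β) := by rw [e1, e2, mul_one, mul_one]
  rw [hRHS, le_div_iff₀ hD]
  calc ‖s - x‖ ^ 2 * (L - lam⁻¹ - β) = (L - lam⁻¹ - β) * ‖s - x‖ ^ 2 := mul_comm _ _
    _ ≤ (L - lam⁻¹ + β) * ‖p - x‖ ^ 2 := key
end

section
/- Sufficient decrease of the Moreau envelope: for every x ∈ ℝ^d, f_λ(S(x)) ≤ f_λ(x) − (θ₂/(2L)) ‖∇f_λ(x)‖², where θ₂ = (L − λ⁻¹ − β)λL / (L + λ⁻¹ − β − 2μ) > 0. -/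
variable {E : Type*} [NormedAddCommGroup E] [InnerProductSpace ℝ E]

lemma combo_norm_sq (a b : E) (t : ℝ) :
    ‖t • a + (1 - t) • b‖ ^ 2
      = t * ‖a‖ ^ 2 + (1 - t) * ‖b‖ ^ 2 - t * (1 - t) * ‖a - b‖ ^ 2 := by
  have h1 : ‖t • a + (1 - t) • b‖ ^ 2
      = ‖t • a‖ ^ 2 + 2 * inner ℝ (t • a) ((1 - t) • b) + ‖(1 - t) • b‖ ^ 2 :=
    norm_add_sq_real _ _
  have h2 : ‖a - b‖ ^ 2 = ‖a‖ ^ 2 - 2 * inner ℝ a b + ‖b‖ ^ 2 := norm_sub_sq_real a b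
  have h3 : (inner ℝ (t • a) ((1 - t) • b) : ℝ) = t * (1 - t) * inner ℝ a b := by
    rw [real_inner_smul_left, real_inner_smul_right]; ring
  have h4 : ‖t • a‖ ^ 2 = t ^ 2 * ‖a‖ ^ 2 := by
    rw [norm_smul, mul_pow, Real.norm_eq_abs, sq_abs]
  have h5 : ‖(1 - t) • b‖ ^ 2 = (1 - t) ^ 2 * ‖b‖ ^ 2 := by
    rw [norm_smul, mul_pow, Real.norm_eq_abs, sq_abs]
  rw [h1, h3, h4, h5]; nlinarith [h2]

lemma strong_min (ψ : E → ℝ) (α : ℝ) (hα : 0 ≤ α) (m : E)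
    (hsc : ∀ y : E, ∀ t : ℝ, 0 < t → t < 1 →
      ψ (t • y + (1 - t) • m) ≤ t * ψ y + (1 - t) * ψ m - α / 2 * (t * (1 - t)) * ‖y - m‖ ^ 2)
    (hmin : ∀ y, ψ m ≤ ψ y) :
    ∀ y, ψ m + α / 2 * ‖y - m‖ ^ 2 ≤ ψ y := by
  intro y
  set C := α / 2 * ‖y - m‖ ^ 2 with hC
  have hC0 : 0 ≤ C := by positivity
  refine le_of_forall_pos_le_add ?_
  intro ε hε
  set t : ℝ := min (1/2) (ε / (C + 1)) with ht
  have ht0 : 0 < t := lt_min (by norm_num) (by positivity)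
  have ht1 : t < 1 := lt_of_le_of_lt (min_le_left _ _) (by norm_num)
  have h1 := hsc y t ht0 ht1
  have h2 := hmin (t • y + (1 - t) • m)
  have h3 : t * (ψ m) ≤ t * (ψ y) - α / 2 * (t * (1 - t)) * ‖y - m‖ ^ 2 := by linarith
  have h4 : ψ m ≤ ψ y - α / 2 * (1 - t) * ‖y - m‖ ^ 2 := by
    nlinarith [mul_pos ht0 (sub_pos.mpr ht1)]
  have h5 : t * C ≤ ε := by
    have : t ≤ ε / (C + 1) := min_le_right _ _
    have h6 : t * (C + 1) ≤ ε := by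
      rw [← le_div_iff₀ (by positivity)]; exact this
    nlinarith
  nlinarith

set_option maxHeartbeats 2000000 in
/-- Sufficient decrease of the Moreau envelope: for every `x`,
`f_λ(S(x)) ≤ f_λ(x) − (θ₂/(2L))‖∇f_λ(x)‖²`, where
`θ₂ = (L − λ⁻¹ − β)λL/(L + λ⁻¹ − β − 2μ) > 0` and `∇f_λ(x) = λ⁻¹(x − prox_{λf}(x))`. -/
theorem moreau_sufficient_decrease
    {d : ℕ} (hd : 1 ≤ d)
    (f : EuclideanSpace ℝ (Fin d) → ℝ)
    (model : EuclideanSpace ℝ (Fin d) → EuclideanSpace ℝ (Fin d) → ℝ)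
    (β μ L lam : ℝ)
    (hβ : 0 < β) (hμ : 0 ≤ μ)
    (hlsc : LowerSemicontinuous f)
    (hmodel_lsc : ∀ x, LowerSemicontinuous (model x))
    (hmodel_wc : ∀ x, ConvexOn ℝ Set.univ (fun y => model x y + μ / 2 * ‖y‖ ^ 2))
    (hmodel_close : ∀ x y : EuclideanSpace ℝ (Fin d),
      |f y - model x y| ≤ β / 2 * ‖y - x‖ ^ 2)
    (hL : L > 7 / 2 * β + 3 * μ)
    (hlam : lam = (L / 2 + (β + 2 * μ) / 4)⁻¹)
    (prox : EuclideanSpace ℝ (Fin d) → EuclideanSpace ℝ (Fin d))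
    (hprox : ∀ x y : EuclideanSpace ℝ (Fin d),
      f (prox x) + 1 / (2 * lam) * ‖prox x - x‖ ^ 2 ≤ f y + 1 / (2 * lam) * ‖y - x‖ ^ 2)
    (S : EuclideanSpace ℝ (Fin d) → EuclideanSpace ℝ (Fin d))
    (hS : ∀ x y : EuclideanSpace ℝ (Fin d),
      model x (S x) + L / 2 * ‖S x - x‖ ^ 2 ≤ model x y + L / 2 * ‖y - x‖ ^ 2)
    (flam : EuclideanSpace ℝ (Fin d) → ℝ)
    (hflam : ∀ x, flam x = f (prox x) + 1 / (2 * lam) * ‖prox x - x‖ ^ 2) :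
    (L - lam⁻¹ - β) * lam * L / (L + lam⁻¹ - β - 2 * μ) > 0 ∧
    ∀ x : EuclideanSpace ℝ (Fin d),
      flam (S x) ≤
        flam x -
          ((L - lam⁻¹ - β) * lam * L / (L + lam⁻¹ - β - 2 * μ)) / (2 * L) *
            ‖lam⁻¹ • (x - prox x)‖ ^ 2 := by
  obtain ⟨R, hR⟩ : ∃ R : ℝ, R = L / 2 + (β + 2 * μ) / 4 := ⟨_, rfl⟩
  have hLpos : 0 < L := by nlinarith
  have hRpos : 0 < R := by rw [hR]; nlinarith
  have hlamR : lam = R⁻¹ := by rw [hlam, hR]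
  have hlampos : 0 < lam := by rw [hlamR]; exact inv_pos.mpr hRpos
  have hrinv : lam⁻¹ = R := by rw [hlamR, inv_inv]
  have h2lam : 1 / (2 * lam) = R / 2 := by
    rw [hlamR]; rw [inv_eq_one_div]; field_simp
  have hK : 0 < L - R - β := by rw [hR]; nlinarith
  have hD : 0 < L + R - β - 2 * μ := by rw [hR]; nlinarith
  rw [hrinv]
  constructor
  · exact div_pos (mul_pos (mul_pos hK hlampos) hLpos) hD
  intro x
  -- weak convexity inequality for f
  have hfwc : ∀ y z : EuclideanSpace ℝ (Fin d), ∀ t : ℝ, 0 < t → t < 1 →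
      f (t • y + (1 - t) • z)
        ≤ t * f y + (1 - t) * f z + (β + μ) / 2 * (t * (1 - t)) * ‖y - z‖ ^ 2 := by
    intro y z t ht0 ht1
    set w : EuclideanSpace ℝ (Fin d) := t • y + (1 - t) • z with hw
    have hww : f w = model w w := by
      have h := hmodel_close w w
      rw [sub_self, norm_zero] at h
      have h0 : |f w - model w w| ≤ 0 := by simpa using h
      exact sub_eq_zero.mp (abs_nonpos_iff.mp h0)
    have hfy : model w y ≤ f y + β / 2 * ‖y - w‖ ^ 2 := by
      have := (abs_le.mp (hmodel_close w y)).1; linarith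
    have hfz : model w z ≤ f z + β / 2 * ‖z - w‖ ^ 2 := by
      have := (abs_le.mp (hmodel_close w z)).1; linarith
    have hconv := (hmodel_wc w).2 (Set.mem_univ y) (Set.mem_univ z) ht0.le
      (by linarith : (0:ℝ) ≤ 1 - t) (by ring)
    simp only [smul_eq_mul] at hconv
    have hyw : ‖y - w‖ ^ 2 = (1 - t) ^ 2 * ‖y - z‖ ^ 2 := by
      have : y - w = (1 - t) • (y - z) := by rw [hw]; module
      rw [this, norm_smul, mul_pow, Real.norm_eq_abs, sq_abs]
    have hzw : ‖z - w‖ ^ 2 = t ^ 2 * ‖y - z‖ ^ 2 := by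
      have : z - w = t • (z - y) := by rw [hw]; module
      rw [this, norm_smul, mul_pow, Real.norm_eq_abs, sq_abs, norm_sub_rev]
    have ecombo := combo_norm_sq y z t
    rw [← hw] at ecombo
    have e4 : μ / 2 * ‖w‖ ^ 2
        = μ / 2 * (t * ‖y‖ ^ 2 + (1 - t) * ‖z‖ ^ 2 - t * (1 - t) * ‖y - z‖ ^ 2) := by
      rw [ecombo]
    have m1 : t * model w y ≤ t * (f y + β / 2 * ((1 - t) ^ 2 * ‖y - z‖ ^ 2)) := by
      rw [hyw] at hfy; exact mul_le_mul_of_nonneg_left hfy ht0.le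
    have m2 : (1 - t) * model w z ≤ (1 - t) * (f z + β / 2 * (t ^ 2 * ‖y - z‖ ^ 2)) := by
      rw [hzw] at hfz; exact mul_le_mul_of_nonneg_left hfz (by linarith)
    rw [← hw] at hconv
    linarith [hconv, m1, m2, e4, hww]
  -- strong minimality for the prox subproblem
  have hsgm : ∀ y : EuclideanSpace ℝ (Fin d),
      (f (prox x) + 1 / (2 * lam) * ‖prox x - x‖ ^ 2) + (R - β - μ) / 2 * ‖y - prox x‖ ^ 2
        ≤ f y + 1 / (2 * lam) * ‖y - x‖ ^ 2 := by
    have := strong_min (E := EuclideanSpace ℝ (Fin d))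
      (fun y => f y + 1 / (2 * lam) * ‖y - x‖ ^ 2)
      (R - β - μ) (by rw [hR]; nlinarith) (prox x) ?_ (fun y => hprox x y)
    · exact this
    intro y t ht0 ht1
    have hq : ‖(t • y + (1 - t) • prox x) - x‖ ^ 2
        = t * ‖y - x‖ ^ 2 + (1 - t) * ‖prox x - x‖ ^ 2 - t * (1 - t) * ‖y - prox x‖ ^ 2 := by
      have h1 : (t • y + (1 - t) • prox x) - x = t • (y - x) + (1 - t) • (prox x - x) := by
        module
      have h2 : (y - x) - (prox x - x) = y - prox x := by abel
      rw [h1, combo_norm_sq, h2]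
    have hf := hfwc y (prox x) t ht0 ht1
    rw [h2lam, hq]
    have hq2 : R / 2 * (t * ‖y - x‖ ^ 2 + (1 - t) * ‖prox x - x‖ ^ 2
          - t * (1 - t) * ‖y - prox x‖ ^ 2)
        = R / 2 * (t * ‖y - x‖ ^ 2) + R / 2 * ((1 - t) * ‖prox x - x‖ ^ 2)
          - R / 2 * (t * (1 - t) * ‖y - prox x‖ ^ 2) := by ring
    nlinarith [hf]
  -- strong minimality for the model subproblem
  have hshm : ∀ y : EuclideanSpace ℝ (Fin d),
      (model x (S x) + L / 2 * ‖S x - x‖ ^ 2) + (L - μ) / 2 * ‖y - S x‖ ^ 2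
        ≤ model x y + L / 2 * ‖y - x‖ ^ 2 := by
    have := strong_min (E := EuclideanSpace ℝ (Fin d))
      (fun y => model x y + L / 2 * ‖y - x‖ ^ 2)
      (L - μ) (by nlinarith) (S x) ?_ (fun y => hS x y)
    · exact this
    intro y t ht0 ht1
    have hconv := (hmodel_wc x).2 (Set.mem_univ y) (Set.mem_univ (S x)) ht0.le
      (by linarith : (0:ℝ) ≤ 1 - t) (by ring)
    simp only [smul_eq_mul] at hconv
    have hq : ‖(t • y + (1 - t) • S x) - x‖ ^ 2
        = t * ‖y - x‖ ^ 2 + (1 - t) * ‖S x - x‖ ^ 2 - t * (1 - t) * ‖y - S x‖ ^ 2 := by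
      have h1 : (t • y + (1 - t) • S x) - x = t • (y - x) + (1 - t) • (S x - x) := by
        module
      have h2 : (y - x) - (S x - x) = y - S x := by abel
      rw [h1, combo_norm_sq, h2]
    have ecombo := combo_norm_sq y (S x) t
    have e4 : μ / 2 * ‖t • y + (1 - t) • S x‖ ^ 2
        = μ / 2 * (t * ‖y‖ ^ 2 + (1 - t) * ‖S x‖ ^ 2 - t * (1 - t) * ‖y - S x‖ ^ 2) := by
      rw [ecombo]
    rw [hq]
    linarith [hconv, e4]
  -- put everything together
  obtain ⟨a2, ha2⟩ : ∃ r : ℝ, r = ‖S x - x‖ ^ 2 := ⟨_, rfl⟩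
  obtain ⟨b2, hb2⟩ : ∃ r : ℝ, r = ‖prox x - x‖ ^ 2 := ⟨_, rfl⟩
  obtain ⟨c2, hc2⟩ : ∃ r : ℝ, r = ‖S x - prox x‖ ^ 2 := ⟨_, rfl⟩
  have ha2n : 0 ≤ a2 := by rw [ha2]; positivity
  have hb2n : 0 ≤ b2 := by rw [hb2]; positivity
  have hc2n : 0 ≤ c2 := by rw [hc2]; positivity
  have hA := hshm (prox x)
  have hB := hsgm (S x)
  rw [norm_sub_rev (prox x) (S x), ← ha2, ← hb2, ← hc2] at hA
  rw [h2lam, ← ha2, ← hb2, ← hc2] at hB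
  have hC1 : model x (prox x) ≤ f (prox x) + β / 2 * b2 := by
    have := (abs_le.mp (hmodel_close x (prox x))).1; rw [hb2]; linarith
  have hC2 : f (S x) ≤ model x (S x) + β / 2 * a2 := by
    have := (abs_le.mp (hmodel_close x (S x))).2; rw [ha2]; linarith
  have key : (L + R - β - 2 * μ) * c2 ≤ (L - R + β) * b2 + (R - L + β) * a2 := by
    nlinarith [hA, hB, hC1, hC2]
  have key3 : (L + R - β - 2 * μ) * c2 ≤ (L + R - β - 2 * μ - (L - R - β)) * b2 := by
    have h1 : (0:ℝ) ≤ (L - R - β) * a2 := mul_nonneg hK.le ha2n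
    have h2 : L - R + β ≤ L + R - β - 2 * μ - (L - R - β) := by rw [hR]; nlinarith
    nlinarith [mul_le_mul_of_nonneg_right h2 hb2n]
  -- the envelope values
  have hupper : flam (S x) ≤ f (prox x) + R / 2 * c2 := by
    have h := hprox (S x) (prox x)
    rw [← hflam (S x), h2lam] at h
    rw [norm_sub_rev (prox x) (S x), ← hc2] at h
    exact h
  have hfx : flam x = f (prox x) + R / 2 * b2 := by rw [hflam x, h2lam, ← hb2]
  have hn : ‖R • (x - prox x)‖ ^ 2 = R ^ 2 * b2 := by
    rw [norm_smul, mul_pow, Real.norm_eq_abs, sq_abs, norm_sub_rev, ← hb2]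
  rw [hn, hfx]
  have hfrac : (L - R - β) * lam * L / (L + R - β - 2 * μ) / (2 * L) * (R ^ 2 * b2)
      = (L - R - β) * R / (2 * (L + R - β - 2 * μ)) * b2 := by
    rw [hlamR]
    field_simp
  rw [hfrac]
  have h8 : (L - R - β) * R / (2 * (L + R - β - 2 * μ)) * b2 ≤ R / 2 * (b2 - c2) := by
    rw [div_mul_eq_mul_div, div_le_iff₀ (by positivity)]
    nlinarith [mul_le_mul_of_nonneg_left key3 hRpos.le]
  linarith
end
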